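/- The set V of pure powers contains no infinite Hilbert cube: there do not exist a non-negative integer a₀ and an infinite sequence a₁, a₂, a₃, … of positive integers such that a₀ + Σ_{i∈F} a_i is a pure power for every finite nonempty set F of indices. -/

import Mathlib

/-- A pure power is a positive integer of the form `a ^ n` with `a ≥ 1`, `n ≥ 2`. -/
def IsPurePower (m : ℕ) : Prop := ∃ a n : ℕ, 1 ≤ a ∧ 2 ≤ n ∧ m = a ^ n

/-- There is no infinite Hilbert cube in the set of pure powers. -/

lemma pp_aux_not_pp {p S : ℕ} (hp : p.Prime) (h1 : p ∣ S) (h2 : ¬ (p^2 ∣ S)) :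
    ¬ IsPurePower S := by
  rintro ⟨c, n, _, hn, rfl⟩
  have hpc : p ∣ c := hp.dvd_of_dvd_pow h1
  exact h2 ((pow_dvd_pow_of_dvd hpc 2).trans (pow_dvd_pow c hn))

lemma pp_aux_marker {p w S : ℕ} (hp : p.Prime) (h1 : p^w ∣ S) (h2 : ¬ p^(w+1) ∣ S)
    (hS : IsPurePower S) : ∃ q u : ℕ, q.Prime ∧ q ∣ w ∧ S = u ^ q := by
  obtain ⟨c, n, hc, hn, rfl⟩ := hS
  have hS0 : c ^ n ≠ 0 := by
    intro h
    exact h2 (h ▸ dvd_zero _)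
  have hfac : (c^n).factorization p = w := by
    have hle : w ≤ (c^n).factorization p :=
      (Nat.Prime.pow_dvd_iff_le_factorization hp hS0).mp h1
    have hlt : ¬ (w+1 ≤ (c^n).factorization p) := fun h =>
      h2 ((Nat.Prime.pow_dvd_iff_le_factorization hp hS0).mpr h)
    omega
  have hkey : n * c.factorization p = w := by
    rw [Nat.factorization_pow] at hfac
    simpa using hfac
  refine ⟨n.minFac, c ^ (n / n.minFac), Nat.minFac_prime (by omega), ?_, ?_⟩
  · exact (Nat.minFac_dvd n).trans ⟨c.factorization p, hkey.symm⟩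
  · rw [← pow_mul, Nat.div_mul_cancel (Nat.minFac_dvd n)]

lemma pp_aux_binom (u : ℕ) : ∀ q : ℕ, 2 ≤ q → u^q + u ≤ (u+1)^q := by
  intro q
  induction q with
  | zero => omega
  | succ n ih =>
    intro hq
    by_cases hn : 2 ≤ n
    · have h1 := ih hn
      have h2 : (u^n + u) * (u+1) ≤ (u+1)^n * (u+1) := Nat.mul_le_mul_right _ h1
      have h3 : (u^n + u) * (u+1) = u^(n+1) + u^n + (u*u + u) := by ring
      have h4 : (u+1)^(n+1) = (u+1)^n * (u+1) := by ring
      omega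
    · have hn1 : n = 1 := by omega
      subst hn1
      have h5 : (u+1)^(1+1) = u^(1+1) + 2*u + 1 := by ring
      omega

lemma pp_aux_sum_mod (A : ℕ → ℕ) (M r : ℕ) (h : ∀ t, A t ≡ r [MOD M]) :
    ∀ D : Finset ℕ, (∑ k ∈ D, A k) ≡ D.card * r [MOD M] := by
  intro D
  induction D using Finset.induction_on with
  | empty => simpa using Nat.ModEq.refl 0
  | @insert x Dx hx ih =>
    rw [Finset.sum_insert hx, Finset.card_insert_of_notMem hx]
    have heq : (Dx.card + 1) * r = r + Dx.card * r := by ring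
    rw [heq]
    exact (h x).add ih

lemma pp_frozen (p w B : ℕ) (hp : p.Prime) (hw : w ≠ 0) (g : ℕ → ℕ)
    (hg : ∀ k, 0 < g k) (hB1 : p ^ w ∣ B) (hB2 : ¬ p ^ (w+1) ∣ B)
    (hgd : ∀ k, p ^ (w+1) ∣ g k)
    (hpw : ∀ K : Finset ℕ, IsPurePower (B + ∑ k ∈ K, g k)) : False := by
  classical
  set t := w.primeFactors.card with ht
  set s : ℕ → ℕ := fun j => ∑ k ∈ Finset.range j, g k with hs
  set N : ℕ := t + (s t) ^ w + 2 with hN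
  set τ : ℕ := ∑ k ∈ Finset.Ico t N, g k with hτ
  have hτge : (s t)^w + 2 ≤ τ := by
    have h1 : (Finset.Ico t N).card = (s t)^w + 2 := by
      rw [Nat.card_Ico]; omega
    calc (s t)^w + 2 = ∑ _k ∈ Finset.Ico t N, 1 := by
          rw [Finset.sum_const, smul_eq_mul, mul_one, h1]
      _ ≤ τ := Finset.sum_le_sum (fun k _ => hg k)
  have key : ∀ j, j ≤ t → (p^w ∣ B + (τ + s j)) ∧ (¬ p^(w+1) ∣ (B + (τ + s j)))
      ∧ IsPurePower (B + (τ + s j)) := by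
    intro j hj
    have hdisj : Disjoint (Finset.range j) (Finset.Ico t N) := by
      rw [Finset.disjoint_left]
      intro x hx hx2
      rw [Finset.mem_range] at hx
      rw [Finset.mem_Ico] at hx2
      omega
    have hpow := hpw (Finset.range j ∪ Finset.Ico t N)
    rw [Finset.sum_union hdisj] at hpow
    have hd1 : p^(w+1) ∣ τ + s j :=
      dvd_add (Finset.dvd_sum fun k _ => hgd k) (Finset.dvd_sum fun k _ => hgd k)
    refine ⟨?_, ?_, ?_⟩
    · exact dvd_add hB1 ((pow_dvd_pow p (Nat.le_succ w)).trans hd1)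
    · intro hcon
      have hsub := Nat.dvd_sub hcon hd1
      have hBeq : B + (τ + s j) - (τ + s j) = B := by omega
      rw [hBeq] at hsub
      exact hB2 hsub
    · have heq : B + (s j + τ) = B + (τ + s j) := by omega
      rwa [heq] at hpow
  have hmark : ∀ j : ℕ, ∃ q u : ℕ, j ≤ t →
      (q.Prime ∧ q ∣ w ∧ B + (τ + s j) = u ^ q) := by
    intro j
    by_cases hj : j ≤ t
    · obtain ⟨h1, h2, h3⟩ := key j hj
      obtain ⟨q, u, hq, hqw, hu⟩ := pp_aux_marker hp h1 h2 h3
      exact ⟨q, u, fun _ => ⟨hq, hqw, hu⟩⟩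
    · exact ⟨0, 0, fun h => absurd h hj⟩
  choose Q U hQU using hmark
  have final : ∀ c d : ℕ, c < d → d ≤ t → Q c = Q d → False := by
    intro c d hcd hdt hQcd
    obtain ⟨hqprime, hqw, hSc⟩ := hQU c (by omega)
    obtain ⟨_, _, hSd⟩ := hQU d hdt
    rw [hQcd] at hqprime hqw hSc
    set q := Q d with hq
    -- s relations
    have hcons1 : s c + (∑ k ∈ Finset.Ico c d, g k) = s d := by
      rw [hs]
      simp only [Finset.range_eq_Ico]
      exact Finset.sum_Ico_consecutive g (Nat.zero_le c) (le_of_lt hcd)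
    have hcons2 : s d + (∑ k ∈ Finset.Ico d t, g k) = s t := by
      rw [hs]
      simp only [Finset.range_eq_Ico]
      exact Finset.sum_Ico_consecutive g (Nat.zero_le d) hdt
    have hpos1 : 0 < ∑ k ∈ Finset.Ico c d, g k :=
      Finset.sum_pos (fun k _ => hg k) ⟨c, Finset.mem_Ico.mpr ⟨le_refl c, hcd⟩⟩
    have hscd : s c < s d := by omega
    have hsdt : s d ≤ s t := by omega
    have hst1 : 1 ≤ s t := by omega
    have hq2 : 2 ≤ q := hqprime.two_le
    have hqle : q ≤ w := Nat.le_of_dvd (by omega) hqw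
    have hUc_gt : s t < U c := by
      by_contra hle
      push_neg at hle
      have h2 : U c ^ q ≤ (s t)^q := Nat.pow_le_pow_left hle q
      have h3 : (s t)^q ≤ (s t)^w := Nat.pow_le_pow_right hst1 hqle
      omega
    have hUcd : U c < U d := by
      by_contra hle
      push_neg at hle
      have h2 : U d ^ q ≤ U c ^ q := Nat.pow_le_pow_left hle q
      omega
    have hb : U c ^ q + U c ≤ (U c + 1) ^ q := pp_aux_binom (U c) q hq2
    have hb2 : (U c + 1)^q ≤ U d ^ q := Nat.pow_le_pow_left (by omega) q
    omega
  obtain ⟨j, hjm, j', hj'm, hne, heq⟩ :=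
    Finset.exists_ne_map_eq_of_card_lt_of_maps_to
      (s := Finset.range (t+1)) (t := w.primeFactors)
      (by rw [Finset.card_range]; omega)
      (fun j hj => by
        rw [Finset.mem_coe, Finset.mem_range] at hj
        obtain ⟨h1, h2, _⟩ := hQU j (by omega)
        exact Finset.mem_coe.mpr (Nat.mem_primeFactors.mpr ⟨h1, h2, hw⟩))
  rw [Finset.mem_range] at hjm hj'm
  rcases hne.lt_or_gt with hlt | hlt
  · exact final j j' hlt (by omega) heq
  · exact final j' j hlt (by omega) heq.symm

theorem stmt_10 :
    ¬ ∃ (a₀ : ℕ) (a : ℕ → ℕ), (∀ i, 0 < a i) ∧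
      ∀ F : Finset ℕ, F.Nonempty → IsPurePower (a₀ + ∑ i ∈ F, a i) := by
  classical
  rintro ⟨a₀, a, hapos, hpow⟩
  -- base element and prime
  have hb₀2 : 2 ≤ a₀ + a 0 + a 1 := by
    have h0 := hapos 0
    have h1 := hapos 1
    omega
  set b₀ := a₀ + a 0 + a 1 with hb₀
  set p := b₀.minFac with hpdef
  have hp : p.Prime := Nat.minFac_prime (by omega)
  have hpb : p ∣ b₀ := Nat.minFac_dvd _
  set e := b₀.factorization p with he
  have he1 : 1 ≤ e := hp.factorization_pos_of_dvd (by omega) hpb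
  set M := p ^ (e+2) with hM
  have hM0 : 0 < M := pow_pos hp.pos _
  -- infinite residue class
  have hinf : {i : ℕ | 2 ≤ i}.Infinite := by
    have hfin : {i : ℕ | i ≤ 1}.Finite := Set.finite_le_nat 1
    have h2 := hfin.infinite_compl
    have hcompl : {i : ℕ | i ≤ 1}ᶜ = {i : ℕ | 2 ≤ i} := by
      ext i
      simp only [Set.mem_compl_iff, Set.mem_setOf_eq]
      omega
    rwa [hcompl] at h2
  obtain ⟨r, hrI⟩ : ∃ r, {i : ℕ | 2 ≤ i ∧ a i % M = r}.Infinite := by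
    by_contra hcon
    push_neg at hcon
    have hfin : ∀ r : ℕ, {i : ℕ | 2 ≤ i ∧ a i % M = r}.Finite := fun r =>
      (hcon r)
    have hsub : {i : ℕ | 2 ≤ i} ⊆ ⋃ (v : Fin M), {i : ℕ | 2 ≤ i ∧ a i % M = (v : ℕ)} := by
      intro i hi
      exact Set.mem_iUnion.mpr ⟨⟨a i % M, Nat.mod_lt _ hM0⟩, ⟨hi, rfl⟩⟩
    exact hinf ((Set.finite_iUnion (fun (v : Fin M) => hfin (v : ℕ))).subset hsub)
  have hrM : r < M := by
    obtain ⟨i, hi⟩ := hrI.nonempty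
    rw [← hi.2]
    exact Nat.mod_lt _ hM0
  -- embedding into the class
  let emb : ℕ ↪ {i : ℕ | 2 ≤ i ∧ a i % M = r} := Set.Infinite.natEmbedding _ hrI
  set idx : ℕ → ℕ := fun k => ((emb k : ℕ)) with hidx
  have hidx2 : ∀ k, 2 ≤ idx k := fun k => (emb k).2.1
  have hidxr : ∀ k, a (idx k) % M = r := fun k => (emb k).2.2
  have hidxinj : Function.Injective idx := fun x y hxy =>
    emb.injective (Subtype.val_injective hxy)
  set A : ℕ → ℕ := fun k => a (idx k) with hA
  have hA1 : ∀ k, 0 < A k := fun k => hapos _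
  have hAr : ∀ k, A k ≡ r [MOD M] := by
    intro k
    show A k % M = r % M
    rw [Nat.mod_eq_of_lt hrM]
    exact hidxr k
  -- master: all base+class sums are pure powers
  have hP : ∀ D : Finset ℕ, IsPurePower (b₀ + ∑ k ∈ D, A k) := by
    intro D
    have h0 : (0:ℕ) ∉ insert 1 (D.image idx) := by
      simp only [Finset.mem_insert, Finset.mem_image]
      push_neg
      exact ⟨by omega, fun k _ => by have := hidx2 k; omega⟩
    have h1 : (1:ℕ) ∉ D.image idx := by
      simp only [Finset.mem_image]
      push_neg
      intro k _
      have := hidx2 k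
      omega
    have hne : (insert 0 (insert 1 (D.image idx))).Nonempty := Finset.insert_nonempty _ _
    have hF := hpow (insert 0 (insert 1 (D.image idx))) hne
    rw [Finset.sum_insert h0, Finset.sum_insert h1,
      Finset.sum_image (fun x _ y _ h => hidxinj h)] at hF
    have heq : a₀ + (a 0 + (a 1 + ∑ k ∈ D, a (idx k))) = b₀ + ∑ k ∈ D, A k := by
      rw [hb₀]
      ring
    rwa [heq] at hF
  -- case split on p ∣ r
  by_cases hpr : p ∣ r
  · by_cases hpr2 : p ^ (e+1) ∣ r
    · -- frozen cube with w = e, single elements as blocks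
      have hgd : ∀ k, p^(e+1) ∣ A k := by
        intro k
        have h1 : A k ≡ r [MOD p^(e+1)] :=
          Nat.ModEq.of_dvd (pow_dvd_pow p (by omega)) (hAr k)
        have h2 : r ≡ 0 [MOD p^(e+1)] := (Nat.modEq_zero_iff_dvd).mpr hpr2
        exact (Nat.modEq_zero_iff_dvd).mp (h1.trans h2)
      have hB1 : p ^ e ∣ b₀ := by
        rw [he]
        exact Nat.ordProj_dvd b₀ p
      have hB2 : ¬ p ^ (e+1) ∣ b₀ := by
        rw [he]
        exact Nat.pow_succ_factorization_not_dvd (by omega) hp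
      exact pp_frozen p e b₀ hp (by omega) A hA1 hB1 hB2 hgd (fun K => hP K)
    · -- frozen cube with w = f = v_p(r), blocks of p elements
      have hr0 : r ≠ 0 := by
        intro h
        exact hpr2 (h ▸ dvd_zero _)
      set f := r.factorization p with hf
      have hf1 : 1 ≤ f := hp.factorization_pos_of_dvd hr0 hpr
      have hfr_dvd : p ^ f ∣ r := by
        rw [hf]; exact Nat.ordProj_dvd r p
      have hfr_not : ¬ p^(f+1) ∣ r := by
        rw [hf]; exact Nat.pow_succ_factorization_not_dvd hr0 hp
      have hfe : f ≤ e := by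
        by_contra hcon
        push_neg at hcon
        exact hpr2 ((pow_dvd_pow p hcon).trans hfr_dvd)
      obtain ⟨jb, hjbK⟩ : ∃ jb : ℕ, ¬ p^(f+1) ∣ (b₀ + jb * r) := by
        by_cases hc1 : p^(f+1) ∣ (b₀ + 1 * r)
        · refine ⟨2, fun h2 => hfr_not ?_⟩
          have hsub := Nat.dvd_sub h2 hc1
          have hse : (b₀ + 2*r) - (b₀ + 1*r) = r := by omega
          rwa [hse] at hsub
        · exact ⟨1, hc1⟩
      set B := b₀ + ∑ k ∈ Finset.range jb, A k with hB
      set blk : ℕ → Finset ℕ := fun k => Finset.Ico (jb + p*k) (jb + p*k + p) with hblk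
      have hblkcard : ∀ k, (blk k).card = p := by
        intro k
        rw [hblk]
        simp only [Nat.card_Ico]
        omega
      set g : ℕ → ℕ := fun k => ∑ i ∈ blk k, A i with hg
      have hgpos : ∀ k, 0 < g k := by
        intro k
        apply Finset.sum_pos (fun i _ => hA1 i)
        refine ⟨jb + p*k, Finset.mem_Ico.mpr ⟨le_refl _, ?_⟩⟩
        have := hp.two_le
        omega
      have hrange_mod : (∑ k ∈ Finset.range jb, A k) ≡ jb * r [MOD M] := by
        have := pp_aux_sum_mod A M r hAr (Finset.range jb)
        rwa [Finset.card_range] at this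
      have hBd1 : p ^ f ∣ B := by
        refine dvd_add ((pow_dvd_pow p hfe).trans ?_) ?_
        · rw [he]; exact Nat.ordProj_dvd b₀ p
        · have h1 : (∑ k ∈ Finset.range jb, A k) ≡ jb * r [MOD p^f] :=
            Nat.ModEq.of_dvd (pow_dvd_pow p (by omega)) hrange_mod
          have h2 : jb * r ≡ 0 [MOD p^f] :=
            (Nat.modEq_zero_iff_dvd).mpr (hfr_dvd.mul_left jb)
          exact (Nat.modEq_zero_iff_dvd).mp (h1.trans h2)
      have hBd2 : ¬ p ^ (f+1) ∣ B := by
        intro hcon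
        apply hjbK
        have h1 : (∑ k ∈ Finset.range jb, A k) ≡ jb * r [MOD p^(f+1)] :=
          Nat.ModEq.of_dvd (pow_dvd_pow p (by omega)) hrange_mod
        have h2 : B ≡ b₀ + jb * r [MOD p^(f+1)] := (Nat.ModEq.refl b₀).add h1
        have h3 : B ≡ 0 [MOD p^(f+1)] := (Nat.modEq_zero_iff_dvd).mpr hcon
        exact (Nat.modEq_zero_iff_dvd).mp (h2.symm.trans h3)
      have hgd : ∀ k, p^(f+1) ∣ g k := by
        intro k
        have h1 : g k ≡ p * r [MOD M] := by
          have := pp_aux_sum_mod A M r hAr (blk k)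
          rwa [hblkcard k] at this
        have h2 : g k ≡ p * r [MOD p^(f+1)] :=
          Nat.ModEq.of_dvd (pow_dvd_pow p (by omega)) h1
        have h3 : p^(f+1) ∣ p * r := by
          rw [pow_succ']
          exact mul_dvd_mul_left p hfr_dvd
        have h4 : p * r ≡ 0 [MOD p^(f+1)] := (Nat.modEq_zero_iff_dvd).mpr h3
        exact (Nat.modEq_zero_iff_dvd).mp (h2.trans h4)
      have hfpow : ∀ K : Finset ℕ, IsPurePower (B + ∑ k ∈ K, g k) := by
        intro K
        have hdisjBig : Disjoint (Finset.range jb) (K.biUnion blk) := by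
          rw [Finset.disjoint_left]
          intro x hx hxB
          rw [Finset.mem_range] at hx
          obtain ⟨k, _, hmem⟩ := Finset.mem_biUnion.mp hxB
          rw [hblk] at hmem
          rw [Finset.mem_Ico] at hmem
          omega
        have hpair : ∀ k ∈ (K : Set ℕ), ∀ k' ∈ (K : Set ℕ), k ≠ k' →
            Disjoint (blk k) (blk k') := by
          intro k _ k' _ hne
          rw [Finset.disjoint_left]
          intro x h1 h2
          rw [hblk] at h1 h2
          rw [Finset.mem_Ico] at h1 h2
          rcases hne.lt_or_gt with hlt | hlt
          · have hmul : p * (k+1) ≤ p * k' := Nat.mul_le_mul_left p hlt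
            have hms : p * (k+1) = p * k + p := by ring
            omega
          · have hmul : p * (k'+1) ≤ p * k := Nat.mul_le_mul_left p hlt
            have hms : p * (k'+1) = p * k' + p := by ring
            omega
        have hsum1 := hP (Finset.range jb ∪ K.biUnion blk)
        rw [Finset.sum_union hdisjBig, Finset.sum_biUnion hpair] at hsum1
        have heq2 : b₀ + ((∑ k ∈ Finset.range jb, A k) + ∑ k ∈ K, ∑ i ∈ blk k, A i)
            = B + ∑ k ∈ K, g k := by
          rw [hB, hg]
          ring
        rwa [heq2] at hsum1
      exact pp_frozen p f B hp (by omega) g hgpos hBd1 hBd2 hgd hfpow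
  · -- p does not divide r : produce a sum with v_p = 1
    haveI : NeZero (p^2) := ⟨(pow_pos hp.pos 2).ne'⟩
    have hcop : r.Coprime (p^2) :=
      Nat.Coprime.pow_right 2 ((hp.coprime_iff_not_dvd.mpr hpr).symm)
    set j0 : ZMod (p^2) := ((p : ZMod (p^2)) - (b₀ : ZMod (p^2))) * (r : ZMod (p^2))⁻¹ with hj0
    set j : ℕ := j0.val with hjdef
    have hcast : ((b₀ + j * r : ℕ) : ZMod (p^2)) = ((p : ℕ) : ZMod (p^2)) := by
      push_cast
      have hval : ((j : ℕ) : ZMod (p^2)) = j0 := by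
        rw [hjdef]
        exact ZMod.natCast_rightInverse j0
      rw [hval, hj0]
      have hinv : (r : ZMod (p^2)) * (r : ZMod (p^2))⁻¹ = 1 :=
        ZMod.coe_mul_inv_eq_one r hcop
      calc (b₀ : ZMod (p^2)) + ((p : ZMod (p^2)) - (b₀ : ZMod (p^2))) * (r : ZMod (p^2))⁻¹ * (r : ZMod (p^2))
          = (b₀ : ZMod (p^2)) + ((p : ZMod (p^2)) - (b₀ : ZMod (p^2))) * ((r : ZMod (p^2)) * (r : ZMod (p^2))⁻¹) := by ring
        _ = (p : ZMod (p^2)) := by rw [hinv]; ring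
    have hmod : (b₀ + j * r) ≡ p [MOD p^2] := (ZMod.natCast_eq_natCast_iff _ _ _).mp hcast
    set S := b₀ + ∑ k ∈ Finset.range j, A k with hS
    have hSmod : S ≡ p [MOD p^2] := by
      have h1 : (∑ k ∈ Finset.range j, A k) ≡ j * r [MOD M] := by
        have := pp_aux_sum_mod A M r hAr (Finset.range j)
        rwa [Finset.card_range] at this
      have h2 : (∑ k ∈ Finset.range j, A k) ≡ j * r [MOD p^2] :=
        Nat.ModEq.of_dvd (pow_dvd_pow p (by omega)) h1
      exact ((Nat.ModEq.refl b₀).add h2).trans hmod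
    have hdvd : p ∣ S := by
      have h1 : S ≡ p [MOD p] :=
        Nat.ModEq.of_dvd (dvd_pow_self p (by norm_num)) hSmod
      have h2 : p ≡ 0 [MOD p] := (Nat.modEq_zero_iff_dvd).mpr dvd_rfl
      exact (Nat.modEq_zero_iff_dvd).mp (h1.trans h2)
    have hnot : ¬ p^2 ∣ S := by
      intro hcon
      have h3 : S ≡ 0 [MOD p^2] := (Nat.modEq_zero_iff_dvd).mpr hcon
      have h4 : p^2 ∣ p := (Nat.modEq_zero_iff_dvd).mp (hSmod.symm.trans h3)
      have h5 : p^2 ≤ p := Nat.le_of_dvd hp.pos h4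
      have h6 : p^2 = p * p := by ring
      have h7 := hp.two_le
      have h8 : 2 * p ≤ p * p := Nat.mul_le_mul_right p h7
      omega
    exact pp_aux_not_pp hp hdvd hnot (hP (Finset.range j))
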